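/- Let Q be the quiver on two vertices i → j with k ≥ 2 arrows. Then for every N ≥ 1, the element (μᵢμⱼ)^N does not fix the labelled seed (Q, β); equivalently, the mutation class of (Q, β) under ⟨μᵢ, μⱼ⟩ is infinite. -/

import Mathlib

/-- A labelled seed of rank 2 over a field `F`: an integer `b` recording the
quiver (`b ≥ 0` means `b` arrows from vertex `0` to vertex `1`) and the
labelled cluster `β : Fin 2 → F`. -/
abbrev Seed2' (F : Type*) : Type _ := ℤ × (Fin 2 → F)

/-- Mutation of a rank 2 labelled seed at vertex `i`. -/
def mutate2 {F : Type*} [Field F] (i : Fin 2) (s : Seed2' F) : Seed2' F :=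
  let b := s.1
  let β := s.2
  let j : Fin 2 := if i = 0 then 1 else 0
  let ain : ℕ := ((if i = 1 then b else -b)).toNat   -- arrows `j → i`
  let aout : ℕ := ((if i = 1 then -b else b)).toNat  -- arrows `i → j`
  (-b, fun k => if k = i then (β j ^ ain + β j ^ aout) / β i else β k)

/-- The rank-2 exchange sequence: `xseq κ a b n = (xₙ, xₙ₊₁)` where
`x₀ = a`, `x₁ = b`, `xₙ₊₂ = (1 + xₙ₊₁^κ)/xₙ`. -/
def xseq {F : Type*} [Field F] (κ : ℕ) (a b : F) : ℕ → F × F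
  | 0 => (a, b)
  | n+1 => ((xseq κ a b n).2, (1 + (xseq κ a b n).2 ^ κ) / (xseq κ a b n).1)

/-- The degree sequence `cseq κ n = (cₙ, cₙ₊₁)` where
`c₀ = 1`, `c₁ = 2`, `cₙ₊₂ = κ cₙ₊₁ - cₙ`. -/
def cseq (κ : ℕ) : ℕ → ℤ × ℤ
  | 0 => (1, 2)
  | n+1 => ((cseq κ n).2, (κ : ℤ) * (cseq κ n).2 - (cseq κ n).1)

lemma xseq_fst_succ {F : Type*} [Field F] (κ : ℕ) (a b : F) (n : ℕ) :
    (xseq κ a b (n+1)).1 = (xseq κ a b n).2 := rfl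

lemma xseq_rec {F : Type*} [Field F] (κ : ℕ) (a b : F) (n : ℕ) :
    (xseq κ a b (n+2)).1 = (1 + (xseq κ a b (n+1)).1 ^ κ) / (xseq κ a b n).1 := by
  rw [xseq_fst_succ]; rfl

lemma cseq_fst_succ (κ : ℕ) (n : ℕ) : (cseq κ (n+1)).1 = (cseq κ n).2 := rfl

lemma cseq_rec (κ : ℕ) (n : ℕ) :
    (cseq κ (n+2)).1 = (κ : ℤ) * (cseq κ (n+1)).1 - (cseq κ n).1 := by
  rw [cseq_fst_succ]; rfl

lemma cseq_mono (κ : ℕ) (hκ : 2 ≤ κ) :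
    ∀ n, 1 ≤ (cseq κ n).1 ∧ (cseq κ n).1 < (cseq κ (n+1)).1 := by
  intro n
  induction n with
  | zero => norm_num [cseq]
  | succ m ih =>
    obtain ⟨h1, h2⟩ := ih
    refine ⟨by linarith, ?_⟩
    rw [cseq_rec]
    have h3 : (2:ℤ) * (cseq κ (m+1)).1 ≤ (κ:ℤ) * (cseq κ (m+1)).1 := by
      apply mul_le_mul_of_nonneg_right _ (by linarith)
      exact_mod_cast hκ
    linarith

lemma cseq_ge_two (κ : ℕ) (hκ : 2 ≤ κ) (m : ℕ) :
    2 ≤ (cseq κ (m+1)).1 := by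
  induction m with
  | zero => norm_num [cseq]
  | succ l ih =>
    have := (cseq_mono κ hκ (l+1)).2
    linarith

lemma double_mutate {F : Type*} [Field F] (k : ℤ) (hk : 2 ≤ k) (u v : F) :
    mutate2 1 (mutate2 0 ((k, fun i : Fin 2 => if i = 0 then u else v) : Seed2' F))
      = (k, fun i : Fin 2 => if i = 0 then (1 + v ^ k.toNat) / u
          else (1 + ((1 + v ^ k.toNat) / u) ^ k.toNat) / v) := by
  have h1 : ((-k).toNat) = 0 := Int.toNat_of_nonpos (by omega)
  simp only [mutate2, h1]
  norm_num
  funext i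
  fin_cases i <;> simp [h1]

/-- For the rank 2 quiver with `k ≥ 2` arrows `i → j`, no power `(μᵢμⱼ)^N`
with `N ≥ 1` fixes the labelled seed; hence its mutation class is infinite. -/
theorem rank2_no_periodicity {F : Type*} [Field F] [Algebra ℂ F]
    (k : ℤ) (hk : 2 ≤ k)
    (β : Fin 2 → F) (hind : AlgebraicIndependent ℂ β)
    (N : ℕ) (hN : 1 ≤ N) :
    (fun s : Seed2' F => mutate2 1 (mutate2 0 s))^[N] (k, β) ≠ (k, β) := by
  intro hEq
  set κ := k.toNat with hκdef
  have hκ : 2 ≤ κ := by omega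
  have hinj : Function.Injective
      (MvPolynomial.aeval β : MvPolynomial (Fin 2) ℂ →ₐ[ℂ] F) :=
    algebraicIndependent_iff_injective_aeval.1 hind
  set x : ℕ → F := fun n => (xseq κ (β 0) (β 1) n).1 with hxdef
  -- the iterate formula
  have hiter : ∀ n : ℕ,
      (fun s : Seed2' F => mutate2 1 (mutate2 0 s))^[n] (k, β)
        = (k, fun i : Fin 2 => if i = 0 then x (2*n) else x (2*n+1)) := by
    intro n
    induction n with
    | zero =>
      simp only [Function.iterate_zero, id_eq]
      refine Prod.ext rfl ?_
      funext i
      fin_cases i <;> simp [hxdef, xseq]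
    | succ m ih =>
      rw [Function.iterate_succ_apply', ih]
      show mutate2 1 (mutate2 0 _) = _
      rw [double_mutate k hk (x (2*m)) (x (2*m+1))]
      refine Prod.ext rfl ?_
      funext i
      have h2 : x (2*m+2) = (1 + x (2*m+1) ^ κ) / x (2*m) :=
        xseq_rec κ (β 0) (β 1) (2*m)
      have h3 : x (2*m+3) = (1 + x (2*m+2) ^ κ) / x (2*m+1) :=
        xseq_rec κ (β 0) (β 1) (2*m+1)
      have e1 : 2*(m+1) = 2*m+2 := by ring
      have e2 : 2*(m+1)+1 = 2*m+3 := by ring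
      fin_cases i
      · simp only [e1, h2]
        norm_num
        rfl
      · simp only [e2, h3, h2]
        norm_num
        rfl
  -- the σ weight map
  set σ : MvPolynomial (Fin 2) ℂ →ₐ[ℂ] Polynomial ℂ :=
    MvPolynomial.aeval (fun i : Fin 2 => if i = 0 then (Polynomial.X : Polynomial ℂ)
      else Polynomial.X ^ 2) with hσdef
  have hev : ∀ p : MvPolynomial (Fin 2) ℂ, σ p ≠ 0 → MvPolynomial.aeval β p ≠ 0 := by
    intro p hp hcon
    apply hp
    have : p = 0 := hinj (by simpa using hcon)
    simp [this]
  -- the main induction: numerator/denominator witnesses with weighted degrees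
  have hGood : ∀ n : ℕ,
      (∃ p q : MvPolynomial (Fin 2) ℂ, σ p ≠ 0 ∧ σ q ≠ 0 ∧
        x n * MvPolynomial.aeval β q = MvPolynomial.aeval β p ∧
        ((σ p).natDegree : ℤ) = (σ q).natDegree + (cseq κ n).1) ∧
      (∃ p q : MvPolynomial (Fin 2) ℂ, σ p ≠ 0 ∧ σ q ≠ 0 ∧
        x (n+1) * MvPolynomial.aeval β q = MvPolynomial.aeval β p ∧
        ((σ p).natDegree : ℤ) = (σ q).natDegree + (cseq κ (n+1)).1) := by
    intro n
    induction n with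
    | zero =>
      constructor
      · refine ⟨MvPolynomial.X 0, 1, ?_, ?_, ?_, ?_⟩
        · simp [hσdef, Polynomial.X_ne_zero]
        · simp [hσdef]
        · simp [hxdef, xseq]
        · simp [hσdef, cseq]
      · refine ⟨MvPolynomial.X 1, 1, ?_, ?_, ?_, ?_⟩
        · simp [hσdef]
        · simp [hσdef]
        · simp [hxdef, xseq]
        · simp [hσdef, cseq]
    | succ m ih =>
      obtain ⟨⟨p₀, q₀, hp₀, hq₀, hx₀, hd₀⟩, ⟨p, q, hp, hq, hx1, hd1⟩⟩ := ih
      refine ⟨⟨p, q, hp, hq, hx1, hd1⟩, ?_⟩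
      have hc1 : 1 ≤ (cseq κ (m+1)).1 := (cseq_mono κ hκ (m+1)).1
      have hba : (σ q).natDegree < (σ p).natDegree := by omega
      have hκpos : 0 < κ := by omega
      have hlt : (σ q ^ κ).natDegree < (σ p ^ κ).natDegree := by
        rw [Polynomial.natDegree_pow, Polynomial.natDegree_pow]
        exact (Nat.mul_lt_mul_left hκpos).2 hba
      have hsum_deg : (σ q ^ κ + σ p ^ κ).natDegree = κ * (σ p).natDegree := by
        rw [Polynomial.natDegree_add_eq_right_of_natDegree_lt hlt,
          Polynomial.natDegree_pow]
      have hsum_ne : σ q ^ κ + σ p ^ κ ≠ 0 := by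
        intro h
        have h2 : σ p ^ κ = -(σ q ^ κ) := by linear_combination h
        have h3 := hlt
        rw [h2, Polynomial.natDegree_neg] at h3
        exact lt_irrefl _ h3
      refine ⟨(q^κ + p^κ) * q₀, q^κ * p₀, ?_, ?_, ?_, ?_⟩
      · rw [map_mul, map_add, map_pow, map_pow]
        exact mul_ne_zero hsum_ne hq₀
      · rw [map_mul, map_pow]
        exact mul_ne_zero (pow_ne_zero _ hq) hp₀
      · have hap₀ : MvPolynomial.aeval β p₀ ≠ 0 := hev p₀ hp₀
        have hxm : x m ≠ 0 := by
          intro h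
          apply hap₀
          rw [← hx₀, h, zero_mul]
        have hx2 : x (m+1+1) = (1 + x (m+1) ^ κ) / x m :=
          xseq_rec κ (β 0) (β 1) m
        have hrec : x (m+1+1) * x m = 1 + x (m+1) ^ κ := by
          rw [hx2]; exact div_mul_cancel₀ _ hxm
        have hx1k : x (m+1) ^ κ * MvPolynomial.aeval β q ^ κ
            = MvPolynomial.aeval β p ^ κ := by
          rw [← mul_pow, hx1]
        simp only [map_mul, map_add, map_pow]
        linear_combination (-(x (m+1+1) * MvPolynomial.aeval β q ^ κ)) * hx₀
          + (MvPolynomial.aeval β q ^ κ * MvPolynomial.aeval β q₀) * hrec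
          + MvPolynomial.aeval β q₀ * hx1k
      · have hdP : (σ ((q^κ + p^κ) * q₀)).natDegree
            = κ * (σ p).natDegree + (σ q₀).natDegree := by
          rw [map_mul, map_add, map_pow, map_pow,
            Polynomial.natDegree_mul hsum_ne hq₀, hsum_deg]
        have hdQ : (σ (q^κ * p₀)).natDegree
            = κ * (σ q).natDegree + (σ p₀).natDegree := by
          rw [map_mul, map_pow,
            Polynomial.natDegree_mul (pow_ne_zero _ hq) hp₀,
            Polynomial.natDegree_pow]
        have hcr : (cseq κ (m+1+1)).1
            = (κ:ℤ) * (cseq κ (m+1)).1 - (cseq κ m).1 := cseq_rec κ m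
        rw [hdP, hdQ, hcr]
        push_cast
        linear_combination (κ:ℤ) * hd1 - hd₀
  -- conclusion
  obtain ⟨p, q, hp, hq, hxq, hdq⟩ := (hGood (2*N)).1
  have hβ0 : x (2*N) = β 0 := by
    have := (hiter N).symm.trans hEq
    have h2 := congrFun (congrArg Prod.snd this) 0
    simpa using h2
  have hpeq : p = MvPolynomial.X 0 * q := by
    apply hinj
    simp only [map_mul, MvPolynomial.aeval_X]
    rw [← hxq, hβ0]
  have hσp : σ p = Polynomial.X * σ q := by
    rw [hpeq, map_mul]
    congr 1
    simp [hσdef]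
  have hdeg : (σ p).natDegree = 1 + (σ q).natDegree := by
    rw [hσp, Polynomial.natDegree_mul Polynomial.X_ne_zero hq,
      Polynomial.natDegree_X]
  have hc2N : 2 ≤ (cseq κ (2*N)).1 := by
    have h := cseq_ge_two κ hκ (2*N - 1)
    have : 2*N - 1 + 1 = 2*N := by omega
    rwa [this] at h
  rw [hdeg] at hdq
  push_cast at hdq
  omega
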